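/- Let Ω be a nonempty subset of ℝ^n, let L_0, …, L_m : ℝ^n → ℝ, let a ∈ ℝ^{m+1} satisfy a_i < L_i(x) for all x ∈ Ω and all i, and let k ∈ ℝ^{m+1} satisfy k_i ≥ 0 for all i and Σ_{i=0}^m k_i = 1. If x* ∈ Ω minimizes the weighted Chebyshev objective φ_k(x) = max_{0≤i≤m} k_i (L_i(x) − a_i) over Ω, then x* is weakly Pareto optimal. -/
import Mathlib


/-- If `x*` minimizes the weighted Chebyshev objective
`φ_k(x) = max_i k_i (L_i(x) - a_i)` over a nonempty set `Ω ⊆ ℝ^n`,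
with `a_i < L_i(x)` on `Ω`, `k_i ≥ 0` and `∑ k_i = 1`, then `x*` is
weakly Pareto optimal. -/
theorem weightedChebyshev_minimizer_weaklyParetoOptimal
    (n m : ℕ) (Ω : Set (Fin n → ℝ))
    (L : Fin (m + 1) → (Fin n → ℝ) → ℝ)
    (a k : Fin (m + 1) → ℝ)
    (hΩ : Ω.Nonempty)
    (ha : ∀ x ∈ Ω, ∀ i, a i < L i x)
    (hk : ∀ i, 0 ≤ k i) (hksum : ∑ i, k i = 1)
    (xstar : Fin n → ℝ) (hxstar : xstar ∈ Ω)
    (hmin : ∀ x ∈ Ω,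
      Finset.univ.sup' Finset.univ_nonempty (fun i => k i * (L i xstar - a i)) ≤
        Finset.univ.sup' Finset.univ_nonempty (fun i => k i * (L i x - a i))) :
    ¬ ∃ x' ∈ Ω, ∀ i, L i x' < L i xstar := by
  rintro ⟨x', hx', hdom⟩
  -- some weight is positive
  obtain ⟨j, -, hj⟩ : ∃ j ∈ Finset.univ, 0 < k j := by
    by_contra h
    push_neg at h
    have : ∀ i ∈ (Finset.univ : Finset (Fin (m+1))), k i = 0 := fun i hi =>
      le_antisymm (h i hi) (hk i)
    rw [Finset.sum_eq_zero this] at hksum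
    norm_num at hksum
  set S := Finset.univ.sup' Finset.univ_nonempty (fun i => k i * (L i xstar - a i)) with hS
  have hSpos : 0 < S := lt_of_lt_of_le
    (mul_pos hj (sub_pos.mpr (ha _ hxstar j)))
    (Finset.le_sup' (fun i => k i * (L i xstar - a i)) (Finset.mem_univ j))
  have hlt : Finset.univ.sup' Finset.univ_nonempty (fun i => k i * (L i x' - a i)) < S := by
    apply (Finset.sup'_lt_iff Finset.univ_nonempty).mpr
    intro i _
    rcases (hk i).lt_or_eq with hki | hki
    · calc k i * (L i x' - a i) < k i * (L i xstar - a i) := by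
            apply mul_lt_mul_of_pos_left _ hki
            linarith [hdom i]
        _ ≤ S := Finset.le_sup' (fun i => k i * (L i xstar - a i)) (Finset.mem_univ i)
    · simp [← hki, hSpos]
  exact absurd (hmin x' hx') (not_le.mpr hlt)
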